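/- Let d ≥ 1, N ≥ 1, let x₀,…,x_N ∈ ℝ^d, and suppose S ∈ 𝒮₃⁰ satisfies S(i) = x_i for every i = 0,…,N. Then for every probability measure P on Ω = C([0,N];ℝ^d) that gives full measure to the set of twice continuously differentiable paths and satisfies (X_i)_#P = δ_{x_i} (the Dirac measure at x_i) for every i = 0,…,N, one has ∫_Ω ∫₀^N ‖ω''(t)‖² dt dP(ω) ≥ ∫₀^N ‖S''(t)‖² dt, with equality if and only if P = δ_S, the Dirac measure on Ω concentrated at the path S. -/

import Mathlib

open MeasureTheory

noncomputable section

set_option synthInstance.maxHeartbeats 1000000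
set_option maxHeartbeats 1000000
set_option linter.unusedSectionVars false

/-- The path space `Ω = C([0,N]; ℝ^d)` with the uniform metric. -/
abbrev PathSpace (d N : ℕ) := C(Set.Icc (0:ℝ) (N:ℝ), EuclideanSpace ℝ (Fin d))

instance (d N : ℕ) : MeasurableSpace (PathSpace d N) := borel _
instance (d N : ℕ) : BorelSpace (PathSpace d N) := ⟨rfl⟩

/-- The extension of a path `ω : [0,N] → ℝ^d` to all of `ℝ` by clamping the time
variable to `[0,N]`. -/
def pathExt (d N : ℕ) (ω : PathSpace d N) : ℝ → EuclideanSpace ℝ (Fin d) :=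
  fun t => ω (Set.projIcc (0:ℝ) (N:ℝ) (Nat.cast_nonneg N) t)

/-- The mean-squared acceleration `∫₀^N ‖ω''(t)‖² dt` of a path. -/
def energy (d N : ℕ) (ω : PathSpace d N) : ℝ :=
  ∫ t in (0:ℝ)..(N:ℝ), ‖deriv (deriv (pathExt d N ω)) t‖ ^ 2

/-- The set of twice continuously differentiable paths: restrictions to `[0,N]`
of C² functions on `ℝ`. -/
def C2paths (d N : ℕ) : Set (PathSpace d N) :=
  { ω | ∃ f : ℝ → EuclideanSpace ℝ (Fin d), ContDiff ℝ 2 f ∧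
      ∀ t : Set.Icc (0:ℝ) (N:ℝ), ω t = f t }

/-- The set `𝒮₃⁰` of natural splines with knots `0, 1, …, N`: C² paths which on each
interval `[i, i+1]` coincide with a cubic polynomial with coefficients in `ℝ^d`, and
whose second derivative vanishes at `0` and at `N`. -/
def Spline30 (d N : ℕ) : Set (PathSpace d N) :=
  { ω | ∃ f : ℝ → EuclideanSpace ℝ (Fin d), ContDiff ℝ 2 f ∧
      (∀ t : Set.Icc (0:ℝ) (N:ℝ), ω t = f t) ∧
      (∀ i : Fin N, ∃ a₀ a₁ a₂ a₃ : EuclideanSpace ℝ (Fin d),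
        ∀ t ∈ Set.Icc ((i : ℕ) : ℝ) (((i : ℕ) : ℝ) + 1),
          f t = a₀ + t • a₁ + (t ^ 2) • a₂ + (t ^ 3) • a₃) ∧
      deriv (deriv f) 0 = 0 ∧ deriv (deriv f) (N:ℝ) = 0 }

open Set intervalIntegral
variable {E : Type*} [NormedAddCommGroup E] [InnerProductSpace ℝ E] [CompleteSpace E]

/-- derivative facts from C². -/
lemma c2_facts {f : ℝ → E} (hf : ContDiff ℝ 2 f) :
    Differentiable ℝ f ∧ Differentiable ℝ (deriv f) ∧ Continuous (deriv (deriv f)) := by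
  have h2 : ContDiff ℝ ((1:ℕ∞) + 1) f := by exact_mod_cast hf
  rw [contDiff_succ_iff_deriv] at h2
  obtain ⟨hd, -, h1⟩ := h2
  have h1' : ContDiff ℝ 1 (deriv f) := by exact_mod_cast h1
  rw [contDiff_one_iff_deriv] at h1'
  exact ⟨hd, h1'.1, h1'.2⟩

lemma cubic_hasDerivAt (a₀ a₁ a₂ a₃ : E) (t : ℝ) :
    HasDerivAt (fun t : ℝ => a₀ + t • a₁ + t ^ 2 • a₂ + t ^ 3 • a₃)
      (a₁ + (2 * t) • a₂ + (3 * t ^ 2) • a₃) t := by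
  have h := (((hasDerivAt_const t a₀).add ((hasDerivAt_id t).smul_const a₁)).add
    ((hasDerivAt_pow 2 t).smul_const a₂)).add ((hasDerivAt_pow 3 t).smul_const a₃)
  exact h.congr_deriv (by norm_num)

lemma cubic1_hasDerivAt (a₁ a₂ a₃ : E) (t : ℝ) :
    HasDerivAt (fun t : ℝ => a₁ + (2 * t) • a₂ + (3 * t ^ 2) • a₃)
      ((2:ℝ) • a₂ + (6 * t) • a₃) t := by
  have h2 : HasDerivAt (fun t : ℝ => (2 * t)) 2 t := by
    simpa using (hasDerivAt_id t).const_mul (2:ℝ)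
  have h3 : HasDerivAt (fun t : ℝ => (3 * t ^ 2)) (6 * t) t := by
    have := (hasDerivAt_pow 2 t).const_mul (3:ℝ)
    exact this.congr_deriv (by push_cast; ring)
  have h := ((hasDerivAt_const t a₁).add (h2.smul_const a₂)).add (h3.smul_const a₃)
  exact h.congr_deriv (by norm_num)

/-- second derivative of a C² function equal to a cubic on `[c, c+1]`. -/
lemma deriv2_cubic {f : ℝ → E} (hf : ContDiff ℝ 2 f) {c : ℝ} (a₀ a₁ a₂ a₃ : E)
    (hpoly : ∀ t ∈ Icc c (c+1), f t = a₀ + t • a₁ + t ^ 2 • a₂ + t ^ 3 • a₃) :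
    ∀ t ∈ Icc c (c+1), deriv (deriv f) t = (2:ℝ) • a₂ + (6 * t) • a₃ := by
  set p : ℝ → E := fun t => a₀ + t • a₁ + t ^ 2 • a₂ + t ^ 3 • a₃ with hp
  have hIoo : ∀ t ∈ Ioo c (c+1), deriv (deriv f) t = deriv (deriv p) t := by
    intro t ht
    have hmem : Ioo c (c+1) ∈ nhds t := Ioo_mem_nhds ht.1 ht.2
    have hev : f =ᶠ[nhds t] p :=
      Filter.eventuallyEq_of_mem hmem (fun s hs => hpoly s (Ioo_subset_Icc_self hs))
    exact (hev.deriv.deriv).eq_of_nhds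
  have hderivp : deriv (deriv p) = fun t => (2:ℝ) • a₂ + (6 * t) • a₃ := by
    have h1 : deriv p = fun t => a₁ + (2 * t) • a₂ + (3 * t ^ 2) • a₃ :=
      funext fun t => (cubic_hasDerivAt a₀ a₁ a₂ a₃ t).deriv
    rw [h1]
    exact funext fun t => (cubic1_hasDerivAt a₁ a₂ a₃ t).deriv
  have hcont : Continuous (deriv (deriv f)) := (c2_facts hf).2.2
  have hcont2 : Continuous fun t : ℝ => (2:ℝ) • a₂ + (6 * t) • a₃ := by fun_prop
  have hclos : EqOn (deriv (deriv f)) (fun t => (2:ℝ) • a₂ + (6 * t) • a₃)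
      (closure (Ioo c (c+1))) := by
    apply Set.EqOn.closure (fun t ht => ?_) hcont hcont2
    rw [hIoo t ht, hderivp]
  intro t ht
  have : closure (Ioo c (c+1)) = Icc c (c+1) := closure_Ioo (by linarith)
  exact hclos (this ▸ ht)
set_option linter.unusedSectionVars false

lemma cross_zero {N : ℕ} {fS g : ℝ → E}
    (hfS : ContDiff ℝ 2 fS) (hg : ContDiff ℝ 2 g)
    (hcubic : ∀ i : Fin N, ∃ a₀ a₁ a₂ a₃ : E,
      ∀ t ∈ Icc ((i : ℕ) : ℝ) (((i : ℕ) : ℝ) + 1),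
        fS t = a₀ + t • a₁ + (t ^ 2) • a₂ + (t ^ 3) • a₃)
    (hbc0 : deriv (deriv fS) 0 = 0) (hbcN : deriv (deriv fS) (N:ℝ) = 0)
    (hknot : ∀ i : ℕ, i ≤ N → g (i:ℝ) = 0) :
    ∫ t in (0:ℝ)..(N:ℝ), (inner ℝ (deriv (deriv fS) t) (deriv (deriv g) t) : ℝ) = 0 := by
  obtain ⟨hfSd, hfSd2, hfScont⟩ := c2_facts hfS
  obtain ⟨hgd, hgd2, hgcont⟩ := c2_facts hg
  set G : ℝ → ℝ := fun t => (inner ℝ (deriv (deriv fS) t) (deriv g t) : ℝ) with hG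
  have hcontint : Continuous fun t => (inner ℝ (deriv (deriv fS) t) (deriv (deriv g) t) : ℝ) :=
    hfScont.inner hgcont
  have key : ∀ i : ℕ, i < N →
      ∫ t in ((i:ℕ):ℝ)..(((i:ℕ):ℝ)+1), (inner ℝ (deriv (deriv fS) t) (deriv (deriv g) t) : ℝ)
        = G ((i:ℝ)+1) - G (i:ℝ) := by
    intro i hi
    obtain ⟨a₀, a₁, a₂, a₃, hpoly⟩ := hcubic ⟨i, hi⟩
    have hd2 := deriv2_cubic hfS a₀ a₁ a₂ a₃ hpoly
    set r : ℝ → E := fun t => (2:ℝ) • a₂ + (6 * t) • a₃ with hr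
    set F : ℝ → ℝ := fun t => (inner ℝ (r t) (deriv g t) : ℝ) - (inner ℝ ((6:ℝ) • a₃) (g t) : ℝ)
      with hF
    have hFderiv : ∀ t : ℝ, HasDerivAt F ((inner ℝ (r t) (deriv (deriv g) t) : ℝ)) t := by
      intro t
      have h1 : HasDerivAt r ((6:ℝ) • a₃) t := by
        have h6 : HasDerivAt (fun t : ℝ => 6 * t) 6 t := by
          simpa using (hasDerivAt_id t).const_mul (6:ℝ)
        exact ((hasDerivAt_const t ((2:ℝ) • a₂)).add (h6.smul_const a₃)).congr_deriv (zero_add _)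
      have h2 : HasDerivAt (deriv g) (deriv (deriv g) t) t := (hgd2 t).hasDerivAt
      have h3 : HasDerivAt g (deriv g t) t := (hgd t).hasDerivAt
      have hA := h1.inner ℝ h2
      have hB := (hasDerivAt_const t ((6:ℝ) • a₃)).inner ℝ h3
      have hAB := hA.sub hB
      exact hAB.congr_deriv (by simp [inner_smul_left])
    have hrc : Continuous r := by fun_prop
    have hintc : Continuous fun t => (inner ℝ (r t) (deriv (deriv g) t) : ℝ) := hrc.inner hgcont
    have hFTC : ∫ t in ((i:ℕ):ℝ)..(((i:ℕ):ℝ)+1), (inner ℝ (r t) (deriv (deriv g) t) : ℝ)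
        = F (((i:ℕ):ℝ)+1) - F ((i:ℕ):ℝ) :=
      integral_eq_sub_of_hasDerivAt (fun t _ => hFderiv t) (hintc.intervalIntegrable _ _)
    have hcongr : ∫ t in ((i:ℕ):ℝ)..(((i:ℕ):ℝ)+1),
        (inner ℝ (deriv (deriv fS) t) (deriv (deriv g) t) : ℝ)
        = ∫ t in ((i:ℕ):ℝ)..(((i:ℕ):ℝ)+1), (inner ℝ (r t) (deriv (deriv g) t) : ℝ) := by
      apply integral_congr
      intro t ht
      rw [uIcc_of_le (by linarith)] at ht
      show (inner ℝ (deriv (deriv fS) t) (deriv (deriv g) t) : ℝ) = _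
      rw [hd2 t ht]
    have hgi : g ((i:ℕ):ℝ) = 0 := hknot i (le_of_lt hi)
    have hgi1 : g (((i:ℕ):ℝ)+1) = 0 := by
      have h := hknot (i+1) hi
      push_cast at h ⊢
      exact h
    have hmem0 : ((i:ℕ):ℝ) ∈ Icc ((i:ℕ):ℝ) (((i:ℕ):ℝ)+1) := ⟨le_refl _, by linarith⟩
    have hmem1 : (((i:ℕ):ℝ)+1) ∈ Icc ((i:ℕ):ℝ) (((i:ℕ):ℝ)+1) := ⟨by linarith, le_refl _⟩
    rw [hcongr, hFTC, hF]
    simp [hG, hgi, hgi1, hd2 _ hmem0, hd2 _ hmem1, hr]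
  have hint : ∀ k : ℕ, k < N →
      IntervalIntegrable (fun t => (inner ℝ (deriv (deriv fS) t) (deriv (deriv g) t) : ℝ))
        volume ((k:ℕ):ℝ) ((k+1:ℕ):ℝ) :=
    fun k _ => hcontint.intervalIntegrable _ _
  have hsum := intervalIntegral.sum_integral_adjacent_intervals
    (a := fun k : ℕ => (k:ℝ)) (μ := volume)
    (f := fun t => (inner ℝ (deriv (deriv fS) t) (deriv (deriv g) t) : ℝ)) hint
  simp only [Nat.cast_zero] at hsum
  rw [← hsum]
  have hterm : ∀ k ∈ Finset.range N,
      (∫ t in ((k:ℕ):ℝ)..((k+1:ℕ):ℝ), (inner ℝ (deriv (deriv fS) t) (deriv (deriv g) t) : ℝ))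
      = (fun n : ℕ => G (n:ℝ)) (k+1) - (fun n : ℕ => G (n:ℝ)) k := by
    intro k hk
    rw [Finset.mem_range] at hk
    have := key k hk
    push_cast
    push_cast at this
    exact this
  rw [Finset.sum_congr rfl hterm, Finset.sum_range_sub (fun n : ℕ => G (n:ℝ))]
  simp [hG, hbc0, hbcN]
/-- second derivative of a difference -/
lemma deriv2_sub {f h : ℝ → E} (hf : ContDiff ℝ 2 f) (hh : ContDiff ℝ 2 h) :
    ∀ t, deriv (deriv (f - h)) t = deriv (deriv f) t - deriv (deriv h) t := by
  obtain ⟨hfd, hfd2, -⟩ := c2_facts hf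
  obtain ⟨hhd, hhd2, -⟩ := c2_facts hh
  have h1 : deriv (f - h) = deriv f - deriv h := by
    funext t
    exact deriv_sub (hfd t) (hhd t)
  intro t
  rw [h1]
  exact deriv_sub (hfd2 t) (hhd2 t)

/-- Energy decomposition: cubic spline case. -/
lemma energy_decomp {N : ℕ} {fS f : ℝ → E}
    (hfS : ContDiff ℝ 2 fS) (hf : ContDiff ℝ 2 f)
    (hcubic : ∀ i : Fin N, ∃ a₀ a₁ a₂ a₃ : E,
      ∀ t ∈ Icc ((i : ℕ) : ℝ) (((i : ℕ) : ℝ) + 1),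
        fS t = a₀ + t • a₁ + (t ^ 2) • a₂ + (t ^ 3) • a₃)
    (hbc0 : deriv (deriv fS) 0 = 0) (hbcN : deriv (deriv fS) (N:ℝ) = 0)
    (hknot : ∀ i : ℕ, i ≤ N → f (i:ℝ) = fS (i:ℝ)) :
    ∫ t in (0:ℝ)..(N:ℝ), ‖deriv (deriv f) t‖ ^ 2
      = (∫ t in (0:ℝ)..(N:ℝ), ‖deriv (deriv fS) t‖ ^ 2)
        + ∫ t in (0:ℝ)..(N:ℝ), ‖deriv (deriv (f - fS)) t‖ ^ 2 := by
  obtain ⟨hfSd, hfSd2, hfScont⟩ := c2_facts hfS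
  obtain ⟨hfd, hfd2, hfcont⟩ := c2_facts hf
  have hgC2 : ContDiff ℝ 2 (f - fS) := hf.sub hfS
  obtain ⟨-, -, hgcont⟩ := c2_facts hgC2
  have hgknot : ∀ i : ℕ, i ≤ N → (f - fS) (i:ℝ) = 0 := by
    intro i hi
    simp [hknot i hi]
  have hcross := cross_zero hfS hgC2 hcubic hbc0 hbcN hgknot
  have hptwise : ∀ t, ‖deriv (deriv f) t‖ ^ 2
      = ‖deriv (deriv fS) t‖ ^ 2
        + 2 * (inner ℝ (deriv (deriv fS) t) (deriv (deriv (f - fS)) t) : ℝ)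
        + ‖deriv (deriv (f - fS)) t‖ ^ 2 := by
    intro t
    have hsplit : deriv (deriv f) t = deriv (deriv fS) t + deriv (deriv (f - fS)) t := by
      rw [deriv2_sub hf hfS t]; abel
    rw [hsplit, norm_add_sq_real]
  have hi1 : IntervalIntegrable (fun t => ‖deriv (deriv fS) t‖ ^ 2) volume 0 (N:ℝ) :=
    (hfScont.norm.pow 2).intervalIntegrable _ _
  have hi2 : IntervalIntegrable
      (fun t => 2 * (inner ℝ (deriv (deriv fS) t) (deriv (deriv (f - fS)) t) : ℝ)) volume 0 (N:ℝ) :=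
    (continuous_const.mul (hfScont.inner hgcont)).intervalIntegrable _ _
  have hi3 : IntervalIntegrable (fun t => ‖deriv (deriv (f - fS)) t‖ ^ 2) volume 0 (N:ℝ) :=
    (hgcont.norm.pow 2).intervalIntegrable _ _
  calc ∫ t in (0:ℝ)..(N:ℝ), ‖deriv (deriv f) t‖ ^ 2
      = ∫ t in (0:ℝ)..(N:ℝ), (‖deriv (deriv fS) t‖ ^ 2
        + 2 * (inner ℝ (deriv (deriv fS) t) (deriv (deriv (f - fS)) t) : ℝ)
        + ‖deriv (deriv (f - fS)) t‖ ^ 2) := by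
        apply integral_congr; intro t _; exact hptwise t
    _ = (∫ t in (0:ℝ)..(N:ℝ), ‖deriv (deriv fS) t‖ ^ 2)
        + 2 * (∫ t in (0:ℝ)..(N:ℝ), (inner ℝ (deriv (deriv fS) t) (deriv (deriv (f - fS)) t) : ℝ))
        + ∫ t in (0:ℝ)..(N:ℝ), ‖deriv (deriv (f - fS)) t‖ ^ 2 := by
        rw [integral_add (hi1.add hi2) hi3, integral_add hi1 hi2, intervalIntegral.integral_const_mul]
    _ = _ := by rw [hcross]; ring
lemma coord_abs_le_norm {d : ℕ} (x : EuclideanSpace ℝ (Fin d)) (j : Fin d) : |x j| ≤ ‖x‖ := by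
  rw [EuclideanSpace.norm_eq, ← Real.sqrt_sq_eq_abs]
  apply Real.sqrt_le_sqrt
  have := Finset.single_le_sum (f := fun i => ‖x i‖ ^ 2)
    (fun i _ => sq_nonneg _) (Finset.mem_univ j)
  simpa [Real.norm_eq_abs, sq_abs] using this

lemma abs_int_le {N : ℕ} {w₁ w₂ : ℝ → ℝ} (hw₁ : Continuous w₁) (hw₂ : Continuous w₂)
    (h0 : ∀ τ ∈ Icc (0:ℝ) (N:ℝ), 0 ≤ w₁ τ ∧ w₁ τ ≤ w₂ τ)
    {a b : ℝ} (ha : a ∈ Icc (0:ℝ) (N:ℝ)) (hb : b ∈ Icc (0:ℝ) (N:ℝ)) :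
    |∫ τ in a..b, w₁ τ| ≤ ∫ τ in (0:ℝ)..(N:ℝ), w₂ τ := by
  have main : ∀ a b : ℝ, a ∈ Icc (0:ℝ) (N:ℝ) → b ∈ Icc (0:ℝ) (N:ℝ) → a ≤ b →
      |∫ τ in a..b, w₁ τ| ≤ ∫ τ in (0:ℝ)..(N:ℝ), w₂ τ := by
    intro a b ha hb hab
    have h1 : (0:ℝ) ≤ ∫ τ in a..b, w₁ τ :=
      intervalIntegral.integral_nonneg hab
        (fun τ hτ => (h0 τ ⟨le_trans ha.1 hτ.1, le_trans hτ.2 hb.2⟩).1)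
    rw [abs_of_nonneg h1]
    have h2 : (∫ τ in a..b, w₁ τ) ≤ ∫ τ in a..b, w₂ τ :=
      intervalIntegral.integral_mono_on hab (hw₁.intervalIntegrable _ _)
        (hw₂.intervalIntegrable _ _)
        (fun τ hτ => (h0 τ ⟨le_trans ha.1 hτ.1, le_trans hτ.2 hb.2⟩).2)
    have h3 : (∫ τ in a..b, w₂ τ) ≤ ∫ τ in (0:ℝ)..(N:ℝ), w₂ τ := by
      apply intervalIntegral.integral_mono_interval ha.1 hab hb.2
      · filter_upwards [ae_restrict_mem measurableSet_Ioc] with τ hτ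
        have := h0 τ ⟨le_of_lt hτ.1, hτ.2⟩
        simp only [Pi.zero_apply]
        linarith [this.1, this.2]
      · exact hw₂.intervalIntegrable _ _
    linarith
  rcases le_total a b with hab | hab
  · exact main a b ha hb hab
  · rw [intervalIntegral.integral_symm, abs_neg]
    exact main b a hb ha hab

lemma poincare {d N : ℕ} (hN : 1 ≤ N) {g : ℝ → EuclideanSpace ℝ (Fin d)}
    (hg : ContDiff ℝ 2 g) (hg0 : g 0 = 0) (hg1 : g 1 = 0) :
    ∀ t ∈ Icc (0:ℝ) (N:ℝ),
      ‖g t‖ ^ 2 ≤ ((d:ℝ) * (N:ℝ) ^ 3) * ∫ s in (0:ℝ)..(N:ℝ), ‖deriv (deriv g) s‖ ^ 2 := by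
  obtain ⟨hgd, hgd2, hgcont⟩ := c2_facts hg
  have hNpos : (0:ℝ) < N := by exact_mod_cast Nat.lt_of_lt_of_le Nat.zero_lt_one hN
  have hN1 : (1:ℝ) ≤ N := by exact_mod_cast hN
  set E1 : ℝ := ∫ s in (0:ℝ)..(N:ℝ), ‖deriv (deriv g) s‖ with hE1
  set E2 : ℝ := ∫ s in (0:ℝ)..(N:ℝ), ‖deriv (deriv g) s‖ ^ 2 with hE2
  have hE2nonneg : 0 ≤ E2 :=
    intervalIntegral.integral_nonneg (le_of_lt hNpos) (fun s _ => sq_nonneg _)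
  have hE1nonneg : 0 ≤ E1 :=
    intervalIntegral.integral_nonneg (le_of_lt hNpos) (fun s _ => norm_nonneg _)
  -- Cauchy-Schwarz
  have hq : ∀ c : ℝ, 0 ≤ (N:ℝ) * (c * c) + (-2 * E1) * c + E2 := by
    intro c
    have hnn : (0:ℝ) ≤ ∫ s in (0:ℝ)..(N:ℝ), (‖deriv (deriv g) s‖ - c) ^ 2 :=
      intervalIntegral.integral_nonneg (le_of_lt hNpos) (fun s _ => sq_nonneg _)
    have hexp : (∫ s in (0:ℝ)..(N:ℝ), (‖deriv (deriv g) s‖ - c) ^ 2)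
        = E2 - (2*c) * E1 + (N:ℝ) * c ^ 2 := by
      have hfe : (fun s => (‖deriv (deriv g) s‖ - c) ^ 2)
          = fun s => (‖deriv (deriv g) s‖ ^ 2 - (2*c) * ‖deriv (deriv g) s‖) + c ^ 2 :=
        funext fun s => by ring
      rw [hfe, intervalIntegral.integral_add
          (f := fun s => ‖deriv (deriv g) s‖ ^ 2 - (2*c) * ‖deriv (deriv g) s‖)
          (((hgcont.norm.pow 2).sub (continuous_const.mul hgcont.norm)).intervalIntegrable _ _)
          (intervalIntegrable_const),
        intervalIntegral.integral_sub (f := fun s => ‖deriv (deriv g) s‖ ^ 2)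
          (g := fun s => (2*c) * ‖deriv (deriv g) s‖) ((hgcont.norm.pow 2).intervalIntegrable _ _)
          ((continuous_const.mul hgcont.norm).intervalIntegrable _ _),
        intervalIntegral.integral_const_mul, intervalIntegral.integral_const]
      simp [smul_eq_mul, hE1, hE2]
    rw [hexp] at hnn
    nlinarith [hnn]
  have hdisc := discrim_le_zero (a := (N:ℝ)) (b := -2 * E1) (c := E2) hq
  have hCS : E1 ^ 2 ≤ (N:ℝ) * E2 := by
    rw [discrim] at hdisc
    nlinarith [hdisc]
  -- coordinatewise bound
  intro t ht
  have hcoord : ∀ j : Fin d, (g t j) ^ 2 ≤ ((N:ℝ) * E1) ^ 2 := by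
    intro j
    set u : ℝ → ℝ := fun τ => g τ j with hu
    set u' : ℝ → ℝ := fun τ => deriv g τ j with hu'
    set u'' : ℝ → ℝ := fun τ => deriv (deriv g) τ j with hu''
    have hud : ∀ τ, HasDerivAt u (u' τ) τ := by
      intro τ
      have := (EuclideanSpace.proj (𝕜 := ℝ) j).hasFDerivAt.comp_hasDerivAt τ
        (hgd τ).hasDerivAt
      exact this
    have hu'd : ∀ τ, HasDerivAt u' (u'' τ) τ := by
      intro τ
      have := (EuclideanSpace.proj (𝕜 := ℝ) j).hasFDerivAt.comp_hasDerivAt τ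
        (hgd2 τ).hasDerivAt
      exact this
    have hu'c : Continuous u' := by
      have : Continuous (deriv g) := hgd2.continuous
      exact ((EuclideanSpace.proj (𝕜 := ℝ) j).continuous).comp this
    have hu''c : Continuous u'' :=
      ((EuclideanSpace.proj (𝕜 := ℝ) j).continuous).comp hgcont
    have hu0 : u 0 = 0 := by simp [hu, hg0]
    have hu1 : u 1 = 0 := by simp [hu, hg1]
    obtain ⟨ξ, hξmem, hξ⟩ := exists_deriv_eq_zero (f := u) (by norm_num : (0:ℝ) < 1)
      (Continuous.continuousOn
        (((EuclideanSpace.proj (𝕜 := ℝ) j).continuous).comp hgd.continuous))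
      (hu0.trans hu1.symm)
    have hderivu : deriv u = u' := funext fun τ => (hud τ).deriv
    have hu'ξ : u' ξ = 0 := by rw [← hderivu]; exact hξ
    have hξIcc : ξ ∈ Icc (0:ℝ) (N:ℝ) :=
      ⟨le_of_lt hξmem.1, le_trans (le_of_lt hξmem.2) hN1⟩
    have bound1 : ∀ s ∈ Icc (0:ℝ) (N:ℝ), |u' s| ≤ E1 := by
      intro s hs
      have hFTC : ∫ τ in ξ..s, u'' τ = u' s - u' ξ :=
        intervalIntegral.integral_eq_sub_of_hasDerivAt (fun τ _ => hu'd τ)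
          (hu''c.intervalIntegrable _ _)
      have : |u' s| = |∫ τ in ξ..s, u'' τ| := by rw [hFTC, hu'ξ, sub_zero]
      rw [this]
      calc |∫ τ in ξ..s, u'' τ| ≤ abs (∫ τ in ξ..s, |u'' τ|) := by
            have := intervalIntegral.norm_integral_le_abs_integral_norm
              (f := u'') (a := ξ) (b := s) (μ := volume)
            simpa [Real.norm_eq_abs] using this
        _ ≤ ∫ τ in (0:ℝ)..(N:ℝ), ‖deriv (deriv g) τ‖ :=
            abs_int_le (hu''c.abs) hgcont.norm
              (fun τ _ => ⟨abs_nonneg _, coord_abs_le_norm _ _⟩) hξIcc hs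
    have bound2 : |u t| ≤ (N:ℝ) * E1 := by
      have hFTC : ∫ τ in (0:ℝ)..t, u' τ = u t - u 0 :=
        intervalIntegral.integral_eq_sub_of_hasDerivAt (fun τ _ => hud τ)
          (hu'c.intervalIntegrable _ _)
      have h1 : |u t| = |∫ τ in (0:ℝ)..t, u' τ| := by rw [hFTC, hu0, sub_zero]
      rw [h1]
      calc |∫ τ in (0:ℝ)..t, u' τ| ≤ abs (∫ τ in (0:ℝ)..t, |u' τ|) := by
            have := intervalIntegral.norm_integral_le_abs_integral_norm
              (f := u') (a := (0:ℝ)) (b := t) (μ := volume)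
            simpa [Real.norm_eq_abs] using this
        _ ≤ ∫ τ in (0:ℝ)..(N:ℝ), E1 :=
            abs_int_le (hu'c.abs) continuous_const
              (fun τ hτ => ⟨abs_nonneg _, bound1 τ hτ⟩)
              (left_mem_Icc.2 (le_of_lt hNpos)) ht
        _ = (N:ℝ) * E1 := by simp [smul_eq_mul]
    show u t ^ 2 ≤ ((N:ℝ) * E1) ^ 2
    rw [← sq_abs]
    exact pow_le_pow_left₀ (abs_nonneg _) bound2 2
  -- sum over coordinates
  have hnorm : ‖g t‖ ^ 2 = ∑ j : Fin d, (g t j) ^ 2 := by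
    rw [EuclideanSpace.norm_eq, Real.sq_sqrt (Finset.sum_nonneg fun i _ => sq_nonneg _)]
    simp [Real.norm_eq_abs, sq_abs]
  calc ‖g t‖ ^ 2 = ∑ j : Fin d, (g t j) ^ 2 := hnorm
    _ ≤ ∑ _j : Fin d, ((N:ℝ) * E1) ^ 2 := Finset.sum_le_sum (fun j _ => hcoord j)
    _ = (d:ℝ) * ((N:ℝ) * E1) ^ 2 := by
        simp [Finset.sum_const, Finset.card_univ, nsmul_eq_mul]
    _ ≤ (d:ℝ) * ((N:ℝ) ^ 2 * ((N:ℝ) * E2)) := by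
        apply mul_le_mul_of_nonneg_left _ (Nat.cast_nonneg d)
        calc ((N:ℝ) * E1) ^ 2 = (N:ℝ)^2 * E1^2 := by ring
          _ ≤ (N:ℝ)^2 * ((N:ℝ) * E2) :=
            mul_le_mul_of_nonneg_left hCS (sq_nonneg _)
    _ = ((d:ℝ) * (N:ℝ) ^ 3) * E2 := by ring
section Meas

variable {d N : ℕ}

local notation "E'" => EuclideanSpace ℝ (Fin d)
local notation "Icc0N" => Set.Icc (0:ℝ) (N:ℝ)

lemma pathExt_continuous (ω : PathSpace d N) : Continuous (pathExt d N ω) :=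
  ω.continuous.comp continuous_projIcc

lemma pathExt_eq (ω : PathSpace d N) {t : ℝ} (ht : t ∈ Icc0N) :
    pathExt d N ω t = ω ⟨t, ht⟩ := by
  unfold pathExt
  rw [Set.projIcc_of_mem]

lemma pathExt_coe (ω : PathSpace d N) (t : Icc0N) : pathExt d N ω (t : ℝ) = ω t := by
  rw [pathExt_eq ω t.2]

lemma mem_Icc0N_of_uIcc {a b r : ℝ} (ha : a ∈ Icc0N) (hb : b ∈ Icc0N)
    (hr : r ∈ Set.uIcc a b) : r ∈ Icc0N := by
  rw [Set.uIcc] at hr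
  constructor
  · exact le_trans (le_inf ha.1 hb.1) hr.1
  · exact le_trans hr.2 (sup_le ha.2 hb.2)

lemma cont_int (a b : ℝ) :
    Continuous fun v : PathSpace d N => ∫ r in a..b, pathExt d N v r := by
  apply (LipschitzWith.of_dist_le_mul (K := Real.toNNReal |b - a|) ?_).continuous
  intro v w
  rw [Real.coe_toNNReal _ (abs_nonneg _), dist_eq_norm]
  have hsub : (∫ r in a..b, pathExt d N v r) - (∫ r in a..b, pathExt d N w r)
      = ∫ r in a..b, (pathExt d N v r - pathExt d N w r) :=
    (intervalIntegral.integral_sub ((pathExt_continuous v).intervalIntegrable _ _)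
      ((pathExt_continuous w).intervalIntegrable _ _)).symm
  rw [hsub]
  have hb : ∀ r ∈ Set.uIoc a b, ‖pathExt d N v r - pathExt d N w r‖ ≤ dist v w := by
    intro r _
    rw [← dist_eq_norm]
    exact ContinuousMap.dist_apply_le_dist _
  calc ‖∫ r in a..b, (pathExt d N v r - pathExt d N w r)‖
      ≤ dist v w * |b - a| :=
        intervalIntegral.norm_integral_le_of_norm_le_const hb
    _ = |b - a| * dist v w := mul_comm _ _

/-- auxiliary set of triples (function, 1st, 2nd derivative). -/
def ZSet (d N : ℕ) : Set (PathSpace d N × PathSpace d N × PathSpace d N) :=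
  {z | (∀ s t : Set.Icc (0:ℝ) (N:ℝ),
          z.1 t = z.1 s + ∫ r in (s:ℝ)..(t:ℝ), pathExt d N z.2.1 r) ∧
       (∀ s t : Set.Icc (0:ℝ) (N:ℝ),
          z.2.1 t = z.2.1 s + ∫ r in (s:ℝ)..(t:ℝ), pathExt d N z.2.2 r)}

lemma ZSet_closed : IsClosed (ZSet d N) := by
  have h1 : ∀ (s t : Set.Icc (0:ℝ) (N:ℝ)),
      IsClosed {z : PathSpace d N × PathSpace d N × PathSpace d N |
        z.1 t = z.1 s + ∫ r in (s:ℝ)..(t:ℝ), pathExt d N z.2.1 r} := by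
    intro s t
    apply isClosed_eq
    · exact (ContinuousEvalConst.continuous_eval_const t).comp continuous_fst
    · exact ((ContinuousEvalConst.continuous_eval_const s).comp continuous_fst).add
        ((cont_int _ _).comp (continuous_fst.comp continuous_snd))
  have h2 : ∀ (s t : Set.Icc (0:ℝ) (N:ℝ)),
      IsClosed {z : PathSpace d N × PathSpace d N × PathSpace d N |
        z.2.1 t = z.2.1 s + ∫ r in (s:ℝ)..(t:ℝ), pathExt d N z.2.2 r} := by
    intro s t
    apply isClosed_eq
    · exact (ContinuousEvalConst.continuous_eval_const t).comp
        (continuous_fst.comp continuous_snd)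
    · exact ((ContinuousEvalConst.continuous_eval_const s).comp
        (continuous_fst.comp continuous_snd)).add
        ((cont_int _ _).comp (continuous_snd.comp continuous_snd))
  have : ZSet d N = (⋂ s, ⋂ t, {z : PathSpace d N × PathSpace d N × PathSpace d N |
        z.1 t = z.1 s + ∫ r in (s:ℝ)..(t:ℝ), pathExt d N z.2.1 r})
      ∩ (⋂ s, ⋂ t, {z : PathSpace d N × PathSpace d N × PathSpace d N |
        z.2.1 t = z.2.1 s + ∫ r in (s:ℝ)..(t:ℝ), pathExt d N z.2.2 r}) := by
    ext z
    simp only [ZSet, Set.mem_setOf_eq, Set.mem_inter_iff, Set.mem_iInter]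
  rw [this]
  exact ((isClosed_iInter fun s => isClosed_iInter fun t => h1 s t).inter
    (isClosed_iInter fun s => isClosed_iInter fun t => h2 s t))

lemma zero_mem_Icc0N : (0:ℝ) ∈ Icc0N := Set.left_mem_Icc.2 (Nat.cast_nonneg N)

/-- primitive construction -/
lemma primitive_hasDerivAt {f : ℝ → E'} (hf : Continuous f) (c : E') :
    ∀ t : ℝ, HasDerivAt (fun u => c + ∫ r in (0:ℝ)..u, f r) (f t) t := by
  intro t
  exact ((hf.integral_hasStrictDerivAt 0 t).hasDerivAt).const_add c

lemma ZSet_fst_mem_C2 {z : PathSpace d N × PathSpace d N × PathSpace d N}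
    (hz : z ∈ ZSet d N) : z.1 ∈ C2paths d N := by
  obtain ⟨h1, h2⟩ := hz
  set t0 : Set.Icc (0:ℝ) (N:ℝ) := ⟨0, zero_mem_Icc0N⟩ with ht0
  set fw : ℝ → E' := pathExt d N z.2.2 with hfw
  have hfwc : Continuous fw := pathExt_continuous _
  set fv : ℝ → E' := fun u => z.2.1 t0 + ∫ r in (0:ℝ)..u, fw r with hfv
  have hfvd : ∀ t, HasDerivAt fv (fw t) t := primitive_hasDerivAt hfwc _
  have hfvc : Continuous fv :=
    continuous_iff_continuousAt.mpr fun t => ((hfvd t).differentiableAt.continuousAt)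
  have hfv_eq : ∀ t : Set.Icc (0:ℝ) (N:ℝ), fv t = z.2.1 t := by
    intro t
    rw [hfv]
    have := h2 t0 t
    simp only [ht0] at this
    rw [this]
  set fu : ℝ → E' := fun u => z.1 t0 + ∫ r in (0:ℝ)..u, fv r with hfu
  have hfud : ∀ t, HasDerivAt fu (fv t) t := primitive_hasDerivAt hfvc _
  have hfu_eq : ∀ t : Set.Icc (0:ℝ) (N:ℝ), fu t = z.1 t := by
    intro t
    have hcongr : ∫ r in (0:ℝ)..(t:ℝ), fv r = ∫ r in (0:ℝ)..(t:ℝ), pathExt d N z.2.1 r := by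
      apply intervalIntegral.integral_congr
      intro r hr
      have hrmem : r ∈ Icc0N := mem_Icc0N_of_uIcc zero_mem_Icc0N t.2 hr
      rw [pathExt_eq _ hrmem, ← hfv_eq ⟨r, hrmem⟩]
    rw [hfu]
    simp only []
    rw [hcongr]
    have := h1 t0 t
    simp only [ht0] at this
    rw [← this]
  refine ⟨fu, ?_, fun t => (hfu_eq t).symm⟩
  have hdu : deriv fu = fv := funext fun t => (hfud t).deriv
  have hdv : deriv fv = fw := funext fun t => (hfvd t).deriv
  have h2' : ContDiff ℝ ((1:ℕ∞)+1) fu := by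
    rw [contDiff_succ_iff_deriv]
    refine ⟨fun t => (hfud t).differentiableAt, by simp, ?_⟩
    have : ContDiff ℝ 1 fv := by
      rw [contDiff_one_iff_deriv]
      exact ⟨fun t => (hfvd t).differentiableAt, by rw [hdv]; exact hfwc⟩
    rw [hdu]
    exact_mod_cast this
  exact_mod_cast h2'

lemma C2_eq_image : C2paths d N = Prod.fst '' ZSet d N := by
  apply Set.Subset.antisymm
  · rintro ω ⟨f, hf, hagree⟩
    obtain ⟨hfd, hfd2, hfcont⟩ := c2_facts hf
    set v : PathSpace d N := ContinuousMap.mk (fun t : Set.Icc (0:ℝ) (N:ℝ) => deriv f t)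
      ((hfd2.continuous).comp continuous_subtype_val) with hv
    set w : PathSpace d N := ContinuousMap.mk (fun t : Set.Icc (0:ℝ) (N:ℝ) => deriv (deriv f) t)
      (hfcont.comp continuous_subtype_val) with hw
    refine ⟨(ω, v, w), ⟨?_, ?_⟩, rfl⟩
    · intro s t
      have hFTC : ∫ r in (s:ℝ)..(t:ℝ), deriv f r = f t - f s :=
        intervalIntegral.integral_eq_sub_of_hasDerivAt
          (fun r _ => (hfd r).hasDerivAt) ((hfd2.continuous).intervalIntegrable _ _)
      have hcongr : ∫ r in (s:ℝ)..(t:ℝ), pathExt d N v r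
          = ∫ r in (s:ℝ)..(t:ℝ), deriv f r := by
        apply intervalIntegral.integral_congr
        intro r hr
        rw [pathExt_eq _ (mem_Icc0N_of_uIcc s.2 t.2 hr)]
        rfl
      show ω t = ω s + _
      rw [hagree t, hagree s, hcongr, hFTC]
      abel
    · intro s t
      have hFTC : ∫ r in (s:ℝ)..(t:ℝ), deriv (deriv f) r = deriv f t - deriv f s :=
        intervalIntegral.integral_eq_sub_of_hasDerivAt
          (fun r _ => (hfd2 r).hasDerivAt) (hfcont.intervalIntegrable _ _)
      have hcongr : ∫ r in (s:ℝ)..(t:ℝ), pathExt d N w r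
          = ∫ r in (s:ℝ)..(t:ℝ), deriv (deriv f) r := by
        apply intervalIntegral.integral_congr
        intro r hr
        rw [pathExt_eq _ (mem_Icc0N_of_uIcc s.2 t.2 hr)]
        rfl
      show v t = v s + _
      rw [hcongr, hFTC, hv]
      simp
  · rintro ω ⟨z, hz, rfl⟩
    exact ZSet_fst_mem_C2 hz

/-- determination of the derivative component -/
lemma deriv_determined (hN : 1 ≤ N) {a u u' : PathSpace d N}
    (hu : ∀ s t : Set.Icc (0:ℝ) (N:ℝ),
      a t = a s + ∫ r in (s:ℝ)..(t:ℝ), pathExt d N u r)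
    (hu' : ∀ s t : Set.Icc (0:ℝ) (N:ℝ),
      a t = a s + ∫ r in (s:ℝ)..(t:ℝ), pathExt d N u' r) : u = u' := by
  have hNpos : (0:ℝ) < N := by exact_mod_cast Nat.lt_of_lt_of_le Nat.zero_lt_one hN
  set t0 : Set.Icc (0:ℝ) (N:ℝ) := ⟨0, zero_mem_Icc0N⟩ with ht0
  set A : ℝ → E' := fun τ => ∫ r in (0:ℝ)..τ, pathExt d N u r with hA
  set A' : ℝ → E' := fun τ => ∫ r in (0:ℝ)..τ, pathExt d N u' r with hA'
  have hIcc : ∀ τ (hτ : τ ∈ Icc0N), A τ = A' τ := by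
    intro τ hτ
    have e1 := hu t0 ⟨τ, hτ⟩
    have e2 := hu' t0 ⟨τ, hτ⟩
    simp only [ht0] at e1 e2
    have : a ⟨τ, hτ⟩ - a t0 = A τ := by rw [hA]; rw [e1]; abel
    have h2 : a ⟨τ, hτ⟩ - a t0 = A' τ := by rw [hA']; rw [e2]; abel
    rw [← this, h2]
  have hEqOn : Set.EqOn (pathExt d N u) (pathExt d N u') (Set.Ioo (0:ℝ) (N:ℝ)) := by
    intro τ hτ
    have hmem : Set.Ioo (0:ℝ) (N:ℝ) ∈ nhds τ := Ioo_mem_nhds hτ.1 hτ.2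
    have hev : A =ᶠ[nhds τ] A' :=
      Filter.eventuallyEq_of_mem hmem
        (fun s hs => hIcc s (Set.Ioo_subset_Icc_self hs))
    have hdA : HasDerivAt A (pathExt d N u τ) τ := by
      have := ((pathExt_continuous u).integral_hasStrictDerivAt 0 τ).hasDerivAt
      exact this
    have hdA' : HasDerivAt A' (pathExt d N u' τ) τ := by
      have := ((pathExt_continuous u').integral_hasStrictDerivAt 0 τ).hasDerivAt
      exact this
    have hdA2 : HasDerivAt A' (pathExt d N u τ) τ := hdA.congr_of_eventuallyEq hev.symm
    exact (hdA2.unique hdA')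
  have hclos : Set.EqOn (pathExt d N u) (pathExt d N u') (closure (Set.Ioo (0:ℝ) (N:ℝ))) :=
    hEqOn.closure (pathExt_continuous u) (pathExt_continuous u')
  have hIccEq : Set.EqOn (pathExt d N u) (pathExt d N u') Icc0N := by
    rw [← closure_Ioo (ne_of_lt hNpos)]
    exact hclos
  apply ContinuousMap.ext
  intro t
  have := hIccEq t.2
  rw [pathExt_eq _ t.2, pathExt_eq _ t.2] at this
  have ht' : (⟨(t:ℝ), t.2⟩ : Set.Icc (0:ℝ) (N:ℝ)) = t := Subtype.ext rfl
  rw [ht'] at this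
  exact this

lemma ZSet_injOn (hN : 1 ≤ N) : Set.InjOn Prod.fst (ZSet d N) := by
  rintro z hz z' hz' h1
  obtain ⟨hza, hzb⟩ := hz
  obtain ⟨hz'a, hz'b⟩ := hz'
  have hfst : z.1 = z'.1 := h1
  rw [← hfst] at hz'a
  have hv : z.2.1 = z'.2.1 := deriv_determined hN hza hz'a
  rw [← hv] at hz'b
  have hw : z.2.2 = z'.2.2 := deriv_determined hN hzb hz'b
  exact Prod.ext hfst (Prod.ext hv hw)

lemma C2paths_measurableSet (hN : 1 ≤ N) : MeasurableSet (C2paths d N) := by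
  haveI hPol : PolishSpace (PathSpace d N) := inferInstance
  rw [C2_eq_image]
  exact ZSet_closed.measurableSet_image_of_continuousOn_injOn
    continuous_fst.continuousOn (ZSet_injOn hN)

end Meas
section Main

variable {d N : ℕ}

lemma energy_eq {ω : PathSpace d N} {f : ℝ → EuclideanSpace ℝ (Fin d)} (hf : ContDiff ℝ 2 f)
    (hagree : ∀ t : Set.Icc (0:ℝ) (N:ℝ), ω t = f t) :
    energy d N ω = ∫ t in (0:ℝ)..(N:ℝ), ‖deriv (deriv f) t‖ ^ 2 := by
  unfold energy
  have hEq : ∀ x ∈ Set.Ioo (0:ℝ) (N:ℝ),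
      deriv (deriv (pathExt d N ω)) x = deriv (deriv f) x := by
    intro x hx
    have hmem : Set.Ioo (0:ℝ) (N:ℝ) ∈ nhds x := Ioo_mem_nhds hx.1 hx.2
    have hev : pathExt d N ω =ᶠ[nhds x] f := by
      apply Filter.eventuallyEq_of_mem hmem
      intro s hs
      have hsIcc : s ∈ Set.Icc (0:ℝ) (N:ℝ) := Set.Ioo_subset_Icc_self hs
      rw [pathExt_eq _ hsIcc, hagree ⟨s, hsIcc⟩]
    exact (hev.deriv.deriv).eq_of_nhds
  apply intervalIntegral.integral_congr_ae
  have hne : ∀ᵐ x ∂(volume : Measure ℝ), x ≠ (N:ℝ) := by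
    rw [ae_iff]
    have : {x : ℝ | ¬ x ≠ (N:ℝ)} = {(N:ℝ)} := by ext y; simp
    rw [this]
    exact measure_singleton _
  filter_upwards [hne] with x hx hxI
  rw [Set.uIoc_of_le (Nat.cast_nonneg N)] at hxI
  have hxIoo : x ∈ Set.Ioo (0:ℝ) (N:ℝ) := ⟨hxI.1, lt_of_le_of_ne hxI.2 hx⟩
  rw [hEq x hxIoo]

/-- If `S ∈ 𝒮₃⁰` interpolates the points `x i` at the integer times, then any probability
measure `P` on path space concentrated on C² paths whose time-`i` marginals are the Dirac
measures `δ_{x i}` has mean energy at least the energy of `S`, with equality iff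
`P = δ_S`. -/
theorem stmt5 (d N : ℕ) (hd : 1 ≤ d) (hN : 1 ≤ N)
    (x : Fin (N + 1) → EuclideanSpace ℝ (Fin d))
    (S : PathSpace d N) (hS : S ∈ Spline30 d N)
    (hSx : ∀ i : Fin (N + 1), pathExt d N S ((i : ℕ) : ℝ) = x i)
    (P : Measure (PathSpace d N)) (hP : IsProbabilityMeasure P)
    (hP2 : P (C2paths d N) = 1)
    (hPx : ∀ i : Fin (N + 1),
      P.map (fun ω => pathExt d N ω ((i : ℕ) : ℝ)) = Measure.dirac (x i)) :
    ENNReal.ofReal (energy d N S) ≤ ∫⁻ ω, ENNReal.ofReal (energy d N ω) ∂P ∧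
    ((∫⁻ ω, ENNReal.ofReal (energy d N ω) ∂P) = ENNReal.ofReal (energy d N S) ↔
      P = Measure.dirac S) := by
  obtain ⟨fS, hfS, hSagree, hcubic, hbc0, hbcN⟩ := hS
  have hmemIcc : ∀ i : ℕ, i ≤ N → ((i:ℕ):ℝ) ∈ Set.Icc (0:ℝ) (N:ℝ) :=
    fun i hi => ⟨Nat.cast_nonneg i, by exact_mod_cast hi⟩
  have hSknot : ∀ (i : ℕ) (hi : i ≤ N), fS (i:ℝ) = x ⟨i, Nat.lt_succ_of_le hi⟩ := by
    intro i hi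
    have h1 := hSx ⟨i, Nat.lt_succ_of_le hi⟩
    rw [pathExt_eq _ (hmemIcc i hi), hSagree] at h1
    exact h1
  have henergyS : energy d N S = ∫ t in (0:ℝ)..(N:ℝ), ‖deriv (deriv fS) t‖ ^ 2 :=
    energy_eq hfS hSagree
  have hES_nonneg : 0 ≤ energy d N S := by
    rw [henergyS]
    exact intervalIntegral.integral_nonneg (Nat.cast_nonneg N) (fun t _ => sq_nonneg _)
  set C : ℝ := (d:ℝ) * (N:ℝ)^3 with hC
  have hCpos : 0 < C := by
    have h1 : (1:ℝ) ≤ d := by exact_mod_cast hd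
    have h2 : (1:ℝ) ≤ N := by exact_mod_cast hN
    have : (0:ℝ) < (N:ℝ)^3 := by positivity
    nlinarith
  -- pointwise master inequality
  have master : ∀ ω ∈ C2paths d N,
      (∀ i : Fin (N + 1), pathExt d N ω ((i : ℕ) : ℝ) = x i) →
      energy d N S ≤ energy d N ω ∧
      dist ω S ^ 2 ≤ C * (energy d N ω - energy d N S) := by
    rintro ω ⟨f, hf, hagree⟩ hinterp
    have hω_energy : energy d N ω = ∫ t in (0:ℝ)..(N:ℝ), ‖deriv (deriv f) t‖ ^ 2 :=
      energy_eq hf hagree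
    have hknot : ∀ i : ℕ, i ≤ N → f (i:ℝ) = fS (i:ℝ) := by
      intro i hi
      have h1 := hinterp ⟨i, Nat.lt_succ_of_le hi⟩
      rw [pathExt_eq _ (hmemIcc i hi), hagree] at h1
      rw [h1, hSknot i hi]
    have hdec := energy_decomp hfS hf hcubic hbc0 hbcN hknot
    have hgC2 : ContDiff ℝ 2 (f - fS) := hf.sub hfS
    have hdiff : energy d N ω - energy d N S
        = ∫ t in (0:ℝ)..(N:ℝ), ‖deriv (deriv (f - fS)) t‖ ^ 2 := by
      rw [hω_energy, henergyS, hdec]; ring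
    have hE2nonneg : 0 ≤ ∫ t in (0:ℝ)..(N:ℝ), ‖deriv (deriv (f - fS)) t‖ ^ 2 :=
      intervalIntegral.integral_nonneg (Nat.cast_nonneg N) (fun t _ => sq_nonneg _)
    constructor
    · linarith [hdiff, hE2nonneg]
    · have hg0 : (f - fS) 0 = 0 := by
        have := hknot 0 (Nat.zero_le N)
        simp only [Nat.cast_zero] at this
        simp [this]
      have hg1 : (f - fS) 1 = 0 := by
        have := hknot 1 hN
        simp only [Nat.cast_one] at this
        simp [this]
      set q : ℝ := C * (energy d N ω - energy d N S) with hq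
      have hq0 : 0 ≤ q := by
        rw [hq, hdiff]
        exact mul_nonneg (le_of_lt hCpos) hE2nonneg
      have hdist : dist ω S ≤ Real.sqrt q := by
        rw [ContinuousMap.dist_le (Real.sqrt_nonneg q)]
        intro t
        have hpoin := poincare hN hgC2 hg0 hg1 (t:ℝ) t.2
        have heqd : dist (ω t) (S t) = ‖(f - fS) (t:ℝ)‖ := by
          rw [dist_eq_norm, hagree t, hSagree t]
          simp
        rw [heqd]
        have h1 : Real.sqrt (‖(f - fS) (t:ℝ)‖^2) ≤ Real.sqrt q := by
          apply Real.sqrt_le_sqrt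
          rw [hq, hdiff]
          exact hpoin
        rwa [Real.sqrt_sq (norm_nonneg _)] at h1
      calc dist ω S ^ 2 ≤ Real.sqrt q ^ 2 :=
            pow_le_pow_left₀ dist_nonneg hdist 2
        _ = q := Real.sq_sqrt hq0
  -- a.e. facts
  have hmeas : MeasurableSet (C2paths d N) := C2paths_measurableSet hN
  have haeC2 : ∀ᵐ ω ∂P, ω ∈ C2paths d N := by
    have h0 : P ((C2paths d N)ᶜ) = 0 := by
      rw [measure_compl hmeas (measure_ne_top P _), hP2, measure_univ, tsub_self]
    exact h0
  have haeInterp : ∀ᵐ ω ∂P, ∀ i : Fin (N + 1), pathExt d N ω ((i : ℕ) : ℝ) = x i := by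
    rw [MeasureTheory.ae_all_iff]
    intro i
    set T : PathSpace d N → EuclideanSpace ℝ (Fin d) :=
      fun ω => pathExt d N ω ((i : ℕ) : ℝ) with hT
    have hTcont : Continuous T := by
      have : T = fun ω : PathSpace d N =>
          ω (Set.projIcc (0:ℝ) (N:ℝ) (Nat.cast_nonneg N) ((i:ℕ):ℝ)) := rfl
      rw [this]
      exact ContinuousEvalConst.continuous_eval_const _
    have hTmeas : Measurable T := hTcont.measurable
    have h1 : P (T ⁻¹' {x i}) = 1 := by
      rw [← Measure.map_apply hTmeas (measurableSet_singleton _), hPx i]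
      exact Measure.dirac_apply_of_mem (Set.mem_singleton _)
    have h0 : P ((T ⁻¹' {x i})ᶜ) = 0 := by
      rw [measure_compl (hTmeas (measurableSet_singleton _)) (measure_ne_top P _), h1,
        measure_univ, tsub_self]
    exact h0
  -- lower bound
  have hlow : ∀ᵐ ω ∂P,
      ENNReal.ofReal (energy d N S) ≤ ENNReal.ofReal (energy d N ω) := by
    filter_upwards [haeC2, haeInterp] with ω h1 h2
    exact ENNReal.ofReal_le_ofReal (master ω h1 h2).1
  have hbound : ENNReal.ofReal (energy d N S) ≤ ∫⁻ ω, ENNReal.ofReal (energy d N ω) ∂P := by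
    calc ENNReal.ofReal (energy d N S)
        = ∫⁻ _, ENNReal.ofReal (energy d N S) ∂P := by
          rw [lintegral_const, measure_univ, mul_one]
      _ ≤ ∫⁻ ω, ENNReal.ofReal (energy d N ω) ∂P := lintegral_mono_ae hlow
  refine ⟨hbound, ?_, ?_⟩
  · -- equality → P = dirac S
    intro heq
    have key : ∀ n : ℕ, P {ω : PathSpace d N | 1/((n:ℝ)+1) ≤ dist ω S} = 0 := by
      intro n
      set ε : ℝ := 1/((n:ℝ)+1) with hε
      have hεpos : 0 < ε := by positivity
      set δ : ENNReal := ENNReal.ofReal (ε^2 / C) with hδ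
      have hδpos : δ ≠ 0 := by
        rw [hδ]
        simp only [ne_eq, ENNReal.ofReal_eq_zero, not_le]
        positivity
      set B : Set (PathSpace d N) := {ω | ε ≤ dist ω S} with hB
      have hBmeas : MeasurableSet B := by
        have : B = (fun ω : PathSpace d N => dist ω S) ⁻¹' (Set.Ici ε) := rfl
        rw [this]
        exact ((continuous_id.dist continuous_const).measurable) measurableSet_Ici
      have hptw : ∀ᵐ ω ∂P,
          ENNReal.ofReal (energy d N S) + B.indicator (fun _ => δ) ω
            ≤ ENNReal.ofReal (energy d N ω) := by
        filter_upwards [haeC2, haeInterp] with ω h1 h2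
        obtain ⟨hle, hdist⟩ := master ω h1 h2
        by_cases hωB : ω ∈ B
        · rw [Set.indicator_of_mem hωB, hδ]
          have h3 : ε^2 ≤ dist ω S^2 := pow_le_pow_left₀ (le_of_lt hεpos) hωB 2
          have h4 : ε^2 / C ≤ energy d N ω - energy d N S := by
            rw [div_le_iff₀ hCpos] at *
            nlinarith [hdist, h3]
          rw [← ENNReal.ofReal_add hES_nonneg (by positivity)]
          apply ENNReal.ofReal_le_ofReal
          linarith
        · rw [Set.indicator_of_notMem hωB, add_zero]
          exact ENNReal.ofReal_le_ofReal hle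
      have hint : ENNReal.ofReal (energy d N S) + δ * P B
          ≤ ENNReal.ofReal (energy d N S) := by
        calc ENNReal.ofReal (energy d N S) + δ * P B
            = ∫⁻ ω, (ENNReal.ofReal (energy d N S) + B.indicator (fun _ => δ) ω) ∂P := by
              rw [lintegral_add_left measurable_const, lintegral_const, measure_univ, mul_one,
                lintegral_indicator hBmeas, setLIntegral_const]
          _ ≤ ∫⁻ ω, ENNReal.ofReal (energy d N ω) ∂P := lintegral_mono_ae hptw
          _ = ENNReal.ofReal (energy d N S) := heq
      have hzero : δ * P B = 0 := by
        have h5 : ENNReal.ofReal (energy d N S) + δ * P B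
            ≤ ENNReal.ofReal (energy d N S) + 0 := by
          rw [add_zero]; exact hint
        have := (ENNReal.add_le_add_iff_left (ENNReal.ofReal_ne_top)).mp h5
        exact le_antisymm this zero_le
      rcases mul_eq_zero.mp hzero with h | h
      · exact absurd h hδpos
      · exact h
    have hcompl : P ({S}ᶜ) = 0 := by
      have hsub : ({S} : Set (PathSpace d N))ᶜ
          ⊆ ⋃ n : ℕ, {ω : PathSpace d N | 1/((n:ℝ)+1) ≤ dist ω S} := by
        intro ω hω
        have hωne : ω ≠ S := hω
        have hdpos : 0 < dist ω S := dist_pos.mpr hωne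
        obtain ⟨n, hn⟩ := exists_nat_one_div_lt hdpos
        exact Set.mem_iUnion.mpr ⟨n, le_of_lt hn⟩
      exact measure_mono_null hsub (measure_iUnion_null key)
    have hPS : P {S} = 1 := by
      have h1 : (1:ENNReal) ≤ P {S} + P ({S}ᶜ) := by
        rw [← measure_univ (μ := P), ← Set.union_compl_self ({S} : Set (PathSpace d N))]
        exact measure_union_le _ _
      rw [hcompl, add_zero] at h1
      exact le_antisymm prob_le_one h1
    ext A hA
    by_cases hSA : S ∈ A
    · have hPA : P A = 1 := by
        have hle1 : P A ≤ 1 := prob_le_one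
        have hge : (1:ENNReal) ≤ P A := by
          rw [← hPS]
          exact measure_mono (Set.singleton_subset_iff.mpr hSA)
        exact le_antisymm hle1 hge
      rw [hPA, Measure.dirac_apply' _ hA, Set.indicator_of_mem hSA]
      rfl
    · have hPA : P A = 0 := by
        apply measure_mono_null _ hcompl
        intro ω hω
        simp only [Set.mem_compl_iff, Set.mem_singleton_iff]
        rintro rfl
        exact hSA hω
      rw [hPA, Measure.dirac_apply' _ hA, Set.indicator_of_notMem hSA]
  · -- P = dirac S → equality
    rintro rfl
    rw [lintegral_dirac S (fun ω => ENNReal.ofReal (energy d N ω))]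

end Main
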